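/- Let ≤ be a tree order on a finite set V, let G be its comparability graph, and let c : V → {1,…,C} be a coloring such that every vertex u has at most D strict descendants v (i.e., v < u) with c(v) = c(u). Then c is a (C,D)-coloring of G, i.e., every vertex has at most D neighbors of its own color. -/

import Mathlib

/-- The deficiency of a vertex `v` under a coloring `c`: the number of neighbors
of `v` whose color equals `c v`. -/
noncomputable def deficiency {V α : Type*} (G : SimpleGraph V) (c : V → α) (v : V) : ℕ :=
  {w | G.Adj v w ∧ c w = c v}.ncard

/-- `c` is a `(C,D)`-coloring (with colors `Fin C`): every vertex has at most `D`
neighbors of its own color. -/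
def IsDefColoring {V α : Type*} (G : SimpleGraph V) (D : ℕ) (c : V → α) : Prop :=
  ∀ v, deficiency G c v ≤ D

/-- A partial order is a tree order if every up-set `{w | v ≤ w}` is a chain. -/
def IsTreeOrder (V : Type*) [PartialOrder V] : Prop :=
  ∀ v : V, IsChain (· ≤ ·) {w | v ≤ w}

/-- The comparability graph of a partial order: `u` and `v` are adjacent iff they are
distinct and comparable. -/
def compGraph (V : Type*) [PartialOrder V] : SimpleGraph V where
  Adj u v := u ≠ v ∧ (u ≤ v ∨ v ≤ u)
  symm := by
    constructor
    intro u v h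
    exact ⟨h.1.symm, h.2.symm⟩
  loopless := by
    constructor
    intro v h
    exact h.1 rfl
/-- If every vertex has at most `D` strict descendants of its own color, then `c` is a
`(C,D)`-coloring of the comparability graph of the tree order. -/
theorem stmt6 {V : Type*} [Fintype V] [PartialOrder V] (htree : IsTreeOrder V)
    (C D : ℕ) (c : V → Fin C)
    (h : ∀ u : V, {v | v < u ∧ c v = c u}.ncard ≤ D) :
    IsDefColoring (compGraph V) D c := by
  intro u
  classical
  set S := {v | v < u ∧ c v = c u} with hS
  set A := {v | u < v ∧ c v = c u} with hA
  have hNeq : {w | (compGraph V).Adj u w ∧ c w = c u} = S ∪ A := by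
    ext w
    simp only [compGraph, Set.mem_setOf_eq, Set.mem_union, hS, hA]
    constructor
    · rintro ⟨⟨hne, h1 | h2⟩, hc⟩
      · exact Or.inr ⟨lt_of_le_of_ne h1 hne, hc⟩
      · exact Or.inl ⟨lt_of_le_of_ne h2 hne.symm, hc⟩
    · rintro (⟨hlt, hc⟩ | ⟨hlt, hc⟩)
      · exact ⟨⟨(ne_of_lt hlt).symm, Or.inr hlt.le⟩, hc⟩
      · exact ⟨⟨ne_of_lt hlt, Or.inl hlt.le⟩, hc⟩
  unfold deficiency
  rw [hNeq]
  have hdisj : Disjoint S A := by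
    rw [Set.disjoint_left]
    rintro v ⟨h1, _⟩ ⟨h2, _⟩
    exact absurd (h1.trans h2) (lt_irrefl v)
  rw [Set.ncard_union_eq hdisj S.toFinite A.toFinite]
  by_cases hAe : A = ∅
  · simpa [hAe] using h u
  · have hne : A.Nonempty := Set.nonempty_iff_ne_empty.mpr hAe
    obtain ⟨m, hmA, hmax⟩ := Set.Finite.exists_maximalFor id A A.toFinite hne
    have hcm : c m = c u := hmA.2
    have hmmax : ∀ a ∈ A, a ≤ m := by
      intro a haA
      rcases eq_or_ne a m with rfl | hne'
      · exact le_refl a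
      · rcases htree u (le_of_lt haA.1) (le_of_lt hmA.1) hne' with hle | hle
        · exact hle
        · exact hmax haA hle
    have hsub : S ∪ ({u} ∪ (A \ {m})) ⊆ {v | v < m ∧ c v = c m} := by
      rintro v (⟨hv, hc⟩ | (rfl | ⟨hvA, hvm⟩))
      · exact ⟨hv.trans hmA.1, hc.trans hcm.symm⟩
      · exact ⟨hmA.1, hcm.symm⟩
      · exact ⟨lt_of_le_of_ne (hmmax v hvA) (by simpa using hvm), hvA.2.trans hcm.symm⟩
    have huS : u ∉ S := fun hu => lt_irrefl u hu.1
    have huA : u ∉ A := fun hu => lt_irrefl u hu.1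
    have hdisj2 : Disjoint S ({u} ∪ (A \ {m})) := by
      rw [Set.disjoint_union_right]
      constructor
      · simpa [Set.disjoint_singleton_right] using huS
      · exact hdisj.mono_right Set.diff_subset
    have hcard : (S ∪ ({u} ∪ (A \ {m}))).ncard = S.ncard + A.ncard := by
      rw [Set.ncard_union_eq hdisj2 S.toFinite (Set.toFinite _)]
      have huAm : u ∉ A \ {m} := fun hu => huA hu.1
      have : ({u} ∪ (A \ {m})).ncard = (A \ {m}).ncard + 1 := by
        rw [Set.singleton_union, Set.ncard_insert_of_notMem huAm (Set.toFinite _)]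
      rw [this, Set.ncard_diff_singleton_of_mem hmA]
      have hpos : 0 < A.ncard := (Set.ncard_pos A.toFinite).mpr hne
      omega
    calc S.ncard + A.ncard = (S ∪ ({u} ∪ (A \ {m}))).ncard := hcard.symm
      _ ≤ ({v | v < m ∧ c v = c m}).ncard := Set.ncard_le_ncard hsub (Set.toFinite _)
      _ ≤ D := h m
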